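/- Let Q be a prime power, r a positive integer, β ∈ F_{Q^2} with β^{Q+1} = 1, and h ∈ F_{Q^2}[x] of degree d with h(0) ≠ 0 satisfying (x^d · h(1/x))^Q = β · h(x^Q) (as an identity of polynomials, where x^d h(1/x) is the reversal of h and the Q-th power is applied coefficientwise via Frobenius). Then f(x) := x^r · h(x^{Q-1}) permutes F_{Q^2} if and only if gcd(r, Q-1) = 1, gcd(r - d, Q+1) = 1, and h has no roots in μ_{Q+1} = {x ∈ F_{Q^2} : x^{Q+1} = 1}. -/

import Mathlib

open Polynomial

private lemma aux_key_14 {F : Type*} [Field F] (Q : ℕ) (β : F) (h : F[X]) (d : ℕ)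
    (hd : h.natDegree = d) (hrev : h.reverse ^ Q = C β * expand F Q h)
    {α : F} (hα : α ^ (Q + 1) = 1) :
    α ^ d * h.eval α ^ Q = β * h.eval α := by
  have hα0 : α ≠ 0 := by
    rintro rfl; rw [zero_pow (Nat.succ_ne_zero Q)] at hα; exact zero_ne_one hα
  letI : Invertible α := invertibleOfNonzero hα0
  have h1 : (reverse h).eval α⁻¹ * α ^ d = h.eval α := by
    have := Polynomial.eval₂_reverse_mul_pow (RingHom.id F) α h
    rw [invOf_eq_inv, hd] at this; exact this
  have h2 : ((reverse h).eval α⁻¹) ^ Q = β * h.eval (α⁻¹ ^ Q) := by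
    have := congrArg (Polynomial.eval α⁻¹) hrev
    simpa [expand_eval] using this
  have hQinv : α ^ Q = α⁻¹ := by
    have hm : α ^ Q * α = 1 := by rw [← pow_succ]; exact hα
    field_simp
    linear_combination hm
  have h3 : α⁻¹ ^ Q = α := by rw [inv_pow, hQinv, inv_inv]
  rw [h3] at h2
  have h4 : h.eval α ^ Q = β * h.eval α * α ^ (d * Q) := by
    calc h.eval α ^ Q = ((reverse h).eval α⁻¹ * α ^ d) ^ Q := by rw [h1]
    _ = ((reverse h).eval α⁻¹) ^ Q * α ^ (d * Q) := by rw [mul_pow, ← pow_mul]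
    _ = β * h.eval α * α ^ (d * Q) := by rw [h2]
  have h5 : α ^ (d * Q) * α ^ d = 1 := by
    rw [← pow_add]
    have he : d * Q + d = (Q + 1) * d := by ring
    rw [he, pow_mul, hα, one_pow]
  calc α ^ d * h.eval α ^ Q = β * h.eval α * (α ^ (d * Q) * α ^ d) := by rw [h4]; ring
  _ = β * h.eval α := by rw [h5, mul_one]

private lemma aux_surj_14 {F : Type*} [Field F] [Fintype F] (Q : ℕ) (hQ2 : 2 ≤ Q)
    (hF : Fintype.card F = Q ^ 2) {α : F} (hα : α ^ (Q + 1) = 1) :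
    ∃ x : F, x ≠ 0 ∧ x ^ (Q - 1) = α := by
  classical
  have hα0 : α ≠ 0 := by
    rintro rfl; rw [zero_pow (Nat.succ_ne_zero Q)] at hα; exact zero_ne_one hα
  have hcard : Fintype.card Fˣ = Q ^ 2 - 1 := by rw [Fintype.card_units, hF]
  have hfact : (Q - 1) * (Q + 1) = Q ^ 2 - 1 := by
    obtain ⟨m, rfl⟩ : ∃ m, Q = m + 1 := ⟨Q - 1, by omega⟩
    have h2 : (m + 1) ^ 2 = m * (m + 1 + 1) + 1 := by ring
    simp only [Nat.add_sub_cancel]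
    omega
  obtain ⟨g, hg⟩ := IsCyclic.exists_generator (α := Fˣ)
  have hog : orderOf g = Q ^ 2 - 1 := by
    rw [orderOf_eq_card_of_forall_mem_zpowers hg, Nat.card_eq_fintype_card, hcard]
  set a : Fˣ := Units.mk0 α hα0 with ha
  obtain ⟨k, (hk : g ^ k = a)⟩ : a ∈ Submonoid.powers g := by
    rw [mem_powers_iff_mem_zpowers]; exact hg a
  have haQ : a ^ (Q + 1) = 1 := by
    ext; push_cast [ha]; exact hα
  have hdvd : (Q ^ 2 - 1) ∣ k * (Q + 1) := by
    rw [← hog]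
    apply orderOf_dvd_of_pow_eq_one
    rw [pow_mul, hk, haQ]
  rw [← hfact] at hdvd
  have hdvd2 : (Q - 1) ∣ k :=
    (Nat.mul_dvd_mul_iff_right (by omega : 0 < Q + 1)).mp hdvd
  obtain ⟨m, rfl⟩ := hdvd2
  refine ⟨(g ^ m : Fˣ), Units.ne_zero _, ?_⟩
  have hh : ((g ^ m) ^ (Q - 1)) = a := by rw [← hk, ← pow_mul, Nat.mul_comm]
  rw [← Units.val_pow_eq_pow_val, hh]
  simp [ha]

/-- An element of order dividing `l`, not equal to 1, exists in `Fˣ` when `2 ≤ l ∣ Q^2-1`. -/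
private lemma aux_elt_14 {F : Type*} [Field F] [Fintype F] (Q : ℕ)
    (hF : Fintype.card F = Q ^ 2) {l : ℕ} (hl2 : 2 ≤ l) (hl : l ∣ Q ^ 2 - 1)
    (hN : 0 < Q ^ 2 - 1) :
    ∃ ζ : Fˣ, ζ ≠ 1 ∧ ζ ^ l = 1 := by
  classical
  have hcard : Fintype.card Fˣ = Q ^ 2 - 1 := by rw [Fintype.card_units, hF]
  obtain ⟨g, hg⟩ := IsCyclic.exists_generator (α := Fˣ)
  have hog : orderOf g = Q ^ 2 - 1 := by
    rw [orderOf_eq_card_of_forall_mem_zpowers hg, Nat.card_eq_fintype_card, hcard]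
  set N := Q ^ 2 - 1 with hNdef
  refine ⟨g ^ (N / l), ?_, ?_⟩
  · intro hone
    have hdvd : N ∣ N / l := by
      have := orderOf_dvd_of_pow_eq_one hone
      rwa [hog] at this
    have hpos : 0 < N / l := Nat.div_pos (Nat.le_of_dvd hN hl) (by omega)
    have : N ≤ N / l := Nat.le_of_dvd hpos hdvd
    have : N / l < N := Nat.div_lt_self hN (by omega)
    omega
  · rw [← pow_mul, Nat.div_mul_cancel hl, ← hog, pow_orderOf_eq_one]

theorem stmt_14 (p e Q : ℕ) (hp : p.Prime) (he : 0 < e) (hQ : Q = p ^ e)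
    (F : Type*) [Field F] [Fintype F] (hF : Fintype.card F = Q ^ 2)
    (r : ℕ) (hr : 0 < r)
    (β : F) (hβ : β ^ (Q + 1) = 1)
    (h : Polynomial F) (d : ℕ) (hd : h.natDegree = d) (h0 : h.coeff 0 ≠ 0)
    (hrev : h.reverse ^ Q = Polynomial.C β * Polynomial.expand F Q h) :
    Function.Bijective (fun x : F => x ^ r * h.eval (x ^ (Q - 1))) ↔
      (Nat.gcd r (Q - 1) = 1 ∧ Int.gcd ((r : ℤ) - d) ((Q : ℤ) + 1) = 1 ∧
        ∀ α : F, α ^ (Q + 1) = 1 → h.eval α ≠ 0) := by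
  classical
  have hQ2 : 2 ≤ Q := by
    rw [hQ]; calc 2 ≤ p := hp.two_le
    _ = p ^ 1 := (pow_one p).symm
    _ ≤ p ^ e := Nat.pow_le_pow_right hp.pos he
  have hfact : (Q - 1) * (Q + 1) = Q ^ 2 - 1 := by
    obtain ⟨m, hm⟩ : ∃ m, Q = m + 1 := ⟨Q - 1, by omega⟩
    subst hm
    have h2 : (m + 1) ^ 2 = m * (m + 1 + 1) + 1 := by ring
    simp only [Nat.add_sub_cancel]
    omega
  have hN : 0 < Q ^ 2 - 1 := by
    have : 2 ^ 2 ≤ Q ^ 2 := Nat.pow_le_pow_left hQ2 2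
    omega
  have hβ0 : β ≠ 0 := by
    rintro rfl; rw [zero_pow (Nat.succ_ne_zero Q)] at hβ; exact zero_ne_one hβ
  set f : F → F := fun x : F => x ^ r * h.eval (x ^ (Q - 1)) with hf
  have hf0 : f 0 = 0 := by
    simp [hf, zero_pow hr.ne']
  -- x^(Q-1) lands in μ_{Q+1}
  have hμ : ∀ x : F, x ≠ 0 → (x ^ (Q - 1)) ^ (Q + 1) = 1 := by
    intro x hx
    rw [← pow_mul, hfact, ← hF]
    exact FiniteField.pow_card_sub_one_eq_one x hx
  have key : ∀ α : F, α ^ (Q + 1) = 1 → α ^ d * h.eval α ^ Q = β * h.eval α :=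
    fun α hα => aux_key_14 Q β h d hd hrev hα
  -- eval power formula
  have hevalpow : ∀ u : F, u ^ (Q + 1) = 1 → h.eval u ≠ 0 →
      h.eval u ^ (Q - 1) = β * (u ^ d)⁻¹ := by
    intro u hu hh
    have hu0 : u ≠ 0 := by
      rintro rfl; rw [zero_pow (Nat.succ_ne_zero Q)] at hu; exact zero_ne_one hu
    have e1 : u ^ d * (h.eval u ^ (Q - 1) * h.eval u) = β * h.eval u := by
      rw [← pow_succ]
      have hq1 : Q - 1 + 1 = Q := by omega
      rw [hq1]; exact key u hu
    have e2 : u ^ d * h.eval u ^ (Q - 1) = β :=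
      mul_right_cancel₀ hh (by rw [← mul_assoc] at e1; exact e1)
    field_simp
    linear_combination e2
  -- value of f to the (Q-1)
  have hfval : ∀ x : F, x ≠ 0 → h.eval (x ^ (Q - 1)) ≠ 0 →
      (f x) ^ (Q - 1) = β * (x ^ (Q - 1)) ^ r * ((x ^ (Q - 1)) ^ d)⁻¹ := by
    intro x hx hh
    have hu := hμ x hx
    rw [hf]
    simp only
    rw [mul_pow, hevalpow _ hu hh, pow_right_comm]
    ring
  constructor
  · rintro ⟨hinj, hsurj⟩
    -- Part 1: nonvanishing on μ
    have hno : ∀ α : F, α ^ (Q + 1) = 1 → h.eval α ≠ 0 := by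
      intro α hα hbad
      obtain ⟨x, hx0, hxα⟩ := aux_surj_14 Q hQ2 hF hα
      have : f x = f 0 := by rw [hf0, hf]; simp [hxα, hbad]
      exact hx0 (hinj this)
    refine ⟨?_, ?_, hno⟩
    -- Part 2: gcd r (Q-1) = 1
    · by_contra hg
      have hld : Nat.gcd r (Q - 1) ∣ Q - 1 := Nat.gcd_dvd_right _ _
      have hlr : Nat.gcd r (Q - 1) ∣ r := Nat.gcd_dvd_left _ _
      have hl0 : Nat.gcd r (Q - 1) ≠ 0 := by
        intro h0'; rw [h0'] at hld
        have := Nat.eq_zero_of_zero_dvd hld; omega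
      have hl2 : 2 ≤ Nat.gcd r (Q - 1) := by omega
      have hlN : Nat.gcd r (Q - 1) ∣ Q ^ 2 - 1 := hld.trans ⟨Q + 1, hfact.symm⟩
      obtain ⟨ζ, hζ1, hζl⟩ := aux_elt_14 Q hF hl2 hlN hN
      have hζr : (ζ : F) ^ r = 1 := by
        obtain ⟨c, hc⟩ := hlr
        rw [hc]
        rw [pow_mul, ← Units.val_pow_eq_pow_val, hζl, Units.val_one, one_pow]
      have hζq : (ζ : F) ^ (Q - 1) = 1 := by
        obtain ⟨c, hc⟩ := hld
        rw [hc, pow_mul, ← Units.val_pow_eq_pow_val, hζl, Units.val_one, one_pow]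
      have : f (ζ : F) = f 1 := by rw [hf]; simp [hζr, hζq]
      exact hζ1 (Units.ext (by simpa using hinj this))
    -- Part 3: Int.gcd (r - d) (Q + 1) = 1
    · by_contra hg
      have hld : (Int.gcd ((r : ℤ) - d) ((Q : ℤ) + 1) : ℤ) ∣ (Q : ℤ) + 1 := Int.gcd_dvd_right _ _
      have hldn : Int.gcd ((r : ℤ) - d) ((Q : ℤ) + 1) ∣ Q + 1 := by
        have he2 : ((Q : ℤ) + 1) = ((Q + 1 : ℕ) : ℤ) := by push_cast; ring
        rw [he2] at hld; exact_mod_cast hld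
      have hl0 : Int.gcd ((r : ℤ) - d) ((Q : ℤ) + 1) ≠ 0 := by
        intro h0'; rw [h0'] at hldn; have := Nat.eq_zero_of_zero_dvd hldn; omega
      have hl2 : 2 ≤ Int.gcd ((r : ℤ) - d) ((Q : ℤ) + 1) := by omega
      have hlN : Int.gcd ((r : ℤ) - d) ((Q : ℤ) + 1) ∣ Q ^ 2 - 1 :=
        hldn.trans ⟨Q - 1, by rw [← hfact]; ring⟩
      obtain ⟨ζ, hζ1, hζl⟩ := aux_elt_14 Q hF hl2 hlN hN
      -- the map on μ
      set S : {a : F // a ^ (Q + 1) = 1} → {a : F // a ^ (Q + 1) = 1} :=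
        fun a => ⟨β * a.1 ^ r * (a.1 ^ d)⁻¹, by
          rw [mul_pow, mul_pow, inv_pow, ← pow_mul, ← pow_mul,
            mul_comm r (Q + 1), mul_comm d (Q + 1), pow_mul, pow_mul, a.2, hβ]
          simp⟩ with hS
      have hSsurj : Function.Surjective S := by
        rintro ⟨w, hw⟩
        obtain ⟨z, hz0, hzw⟩ := aux_surj_14 Q hQ2 hF hw
        obtain ⟨x, hx⟩ := hsurj z
        have hx0 : x ≠ 0 := by
          rintro rfl; rw [hf0] at hx; exact hz0 hx.symm
        refine ⟨⟨x ^ (Q - 1), hμ x hx0⟩, ?_⟩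
        apply Subtype.ext
        show β * (x ^ (Q - 1)) ^ r * ((x ^ (Q - 1)) ^ d)⁻¹ = w
        rw [← hfval x hx0 (hno _ (hμ x hx0)), hx, hzw]
      have hSinj : Function.Injective S :=
        (Finite.injective_iff_surjective).mpr hSsurj
      -- ζ gives a collision
      have hζQ : ((ζ : F)) ^ (Q + 1) = 1 := by
        obtain ⟨c, hc⟩ := hldn
        rw [hc, pow_mul, ← Units.val_pow_eq_pow_val, hζl, Units.val_one, one_pow]
      have hζrd : (ζ : F) ^ r = (ζ : F) ^ d := by
        have hdd : (Int.gcd ((r : ℤ) - d) ((Q : ℤ) + 1) : ℤ) ∣ (r : ℤ) - d :=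
          Int.gcd_dvd_left _ _
        obtain ⟨k, hk⟩ := hdd
        have hz : ζ ^ (r : ℤ) = ζ ^ (d : ℤ) := by
          have he3 : (r : ℤ) = (d : ℤ) + (Int.gcd ((r : ℤ) - d) ((Q : ℤ) + 1) : ℤ) * k := by
            omega
          have h4 : ζ ^ ((Int.gcd ((r : ℤ) - d) ((Q : ℤ) + 1) : ℕ) : ℤ) = 1 := by
            rw [zpow_natCast, hζl]
          rw [he3, zpow_add, zpow_mul, h4, one_zpow, mul_one]
        have hz2 := congrArg (Units.val) hz
        simpa [zpow_natCast] using hz2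
      have hcol : S ⟨(ζ : F), hζQ⟩ = S ⟨1, one_pow _⟩ := by
        apply Subtype.ext
        show β * (ζ : F) ^ r * ((ζ : F) ^ d)⁻¹ = β * 1 ^ r * ((1 : F) ^ d)⁻¹
        rw [hζrd, mul_assoc, mul_inv_cancel₀ (pow_ne_zero _ ζ.ne_zero)]
        simp
      have hcc := hSinj hcol
      have hv : (ζ : F) = 1 := congrArg Subtype.val hcc
      exact hζ1 (Units.ext (by rw [hv, Units.val_one]))
  · rintro ⟨hcop1, hcop2, hno⟩
    rw [Finite.injective_iff_bijective.symm]
    intro x y hxy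
    replace hxy : x ^ r * h.eval (x ^ (Q - 1)) = y ^ r * h.eval (y ^ (Q - 1)) := hxy
    by_cases hx0 : x = 0
    · subst hx0
      by_contra hy0
      have hy0' : y ≠ 0 := fun hc => hy0 hc.symm
      rw [zero_pow hr.ne', zero_mul] at hxy
      rcases mul_eq_zero.mp hxy.symm with hc | hc
      · exact hy0' (pow_eq_zero_iff hr.ne' |>.mp hc)
      · exact hno _ (hμ y hy0') hc
    by_cases hy0 : y = 0
    · subst hy0
      exfalso
      rw [zero_pow hr.ne', zero_mul] at hxy
      rcases mul_eq_zero.mp hxy with hc | hc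
      · exact hx0 (pow_eq_zero_iff hr.ne' |>.mp hc)
      · exact hno _ (hμ x hx0) hc
    -- main case
    set u := x ^ (Q - 1) with hu
    set v := y ^ (Q - 1) with hv
    have huμ := hμ x hx0
    have hvμ := hμ y hy0
    have hu0 : u ≠ 0 := pow_ne_zero _ hx0
    have hv0 : v ≠ 0 := pow_ne_zero _ hy0
    have hhu := hno _ huμ
    have hhv := hno _ hvμ
    have hpows : β * u ^ r * (u ^ d)⁻¹ = β * v ^ r * (v ^ d)⁻¹ := by
      rw [← hfval x hx0 hhu, ← hfval y hy0 hhv]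
      show (f x) ^ (Q - 1) = (f y) ^ (Q - 1)
      rw [show f x = f y from hxy]
    have E : u ^ r * v ^ d = v ^ r * u ^ d := by
      field_simp at hpows
      have h5 : β * (u ^ r * v ^ d) = β * (v ^ r * u ^ d) := by linear_combination β * hpows
      exact mul_left_cancel₀ hβ0 h5
    -- w := u / v satisfies w^r = w^d and w^(Q+1) = 1
    set w : F := u * v⁻¹ with hw
    have hw0 : w ≠ 0 := mul_ne_zero hu0 (inv_ne_zero hv0)
    have hwQ : w ^ (Q + 1) = 1 := by
      rw [hw, mul_pow, inv_pow, huμ, hvμ]; simp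
    have hwrd : w ^ r = w ^ d := by
      rw [hw, mul_pow, mul_pow, inv_pow, inv_pow]
      field_simp
      linear_combination E
    have hw1 : w = 1 := by
      obtain ⟨a, b, hab⟩ : IsCoprime ((r : ℤ) - d) ((Q : ℤ) + 1) :=
        Int.isCoprime_iff_gcd_eq_one.mpr hcop2
      have h1 : w ^ ((r : ℤ) - d) = 1 := by
        rw [zpow_sub₀ hw0, zpow_natCast, zpow_natCast, hwrd]
        exact div_self (pow_ne_zero _ hw0)
      have h2 : w ^ ((Q : ℤ) + 1) = 1 := by
        have : ((Q : ℤ) + 1) = ((Q + 1 : ℕ) : ℤ) := by push_cast; ring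
        rw [this, zpow_natCast, hwQ]
      calc w = w ^ (1 : ℤ) := (zpow_one w).symm
      _ = w ^ (a * ((r : ℤ) - d) + b * ((Q : ℤ) + 1)) := by rw [hab]
      _ = (w ^ ((r : ℤ) - d)) ^ a * (w ^ ((Q : ℤ) + 1)) ^ b := by
          have e1 : w ^ (a * ((r : ℤ) - d)) = (w ^ ((r : ℤ) - d)) ^ a := by
            rw [mul_comm, zpow_mul]
          have e2 : w ^ (b * ((Q : ℤ) + 1)) = (w ^ ((Q : ℤ) + 1)) ^ b := by
            rw [mul_comm, zpow_mul]
          rw [zpow_add₀ hw0, e1, e2]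
      _ = 1 := by rw [h1, h2, one_zpow, one_zpow, mul_one]
    have huv : u = v := by
      have := hw1
      rw [hw] at this
      field_simp at this
      exact this
    -- now x^r = y^r and x^(Q-1) = y^(Q-1)
    have hxr : x ^ r = y ^ r := by
      rw [huv] at hxy
      exact mul_right_cancel₀ hhv hxy
    -- t := x / y
    set t : F := x * y⁻¹ with ht
    have ht0 : t ≠ 0 := mul_ne_zero hx0 (inv_ne_zero hy0)
    have htr : t ^ r = 1 := by
      rw [ht, mul_pow, inv_pow, hxr, mul_inv_cancel₀ (pow_ne_zero _ hy0)]
    have htq : t ^ (Q - 1) = 1 := by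
      rw [ht, mul_pow, inv_pow, ← hu, ← hv, huv,
        mul_inv_cancel₀ hv0]
    have hot : orderOf t ∣ 1 := by
      rw [← hcop1]
      exact Nat.dvd_gcd (orderOf_dvd_of_pow_eq_one htr) (orderOf_dvd_of_pow_eq_one htq)
    have ht1 : t = 1 := orderOf_eq_one_iff.mp (Nat.dvd_one.mp hot)
    rw [ht] at ht1
    field_simp at ht1
    exact ht1
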